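/- Let κ ∈ {1, −1}. Let V₁, V₂ be complex vector spaces with ℂ-bilinear forms B₁ : V₁ × V₁ → ℂ and B₂ : V₂ × V₂ → ℂ, and define the bilinear form B on V := V₁ × V₂ by B((a, b), (a', b')) := B₁(a, a') + B₂(b, b'). For an even-length list z₁, …, z_{2N} of vectors of V define A(z₁, …, z_{2N}) := (1/N!) · Σ_{σ ∈ S_{2N}} κ^{|σ|} · Π_{j=1}^{N} B(z_{σ(j)}, z_{σ(2N+1−j)}), with the convention A(empty list) = 1, and define A₁, A₂ analogously from B₁, B₂; here κ^{|σ|} is the sign of σ if κ = −1 and 1 if κ = 1. Let η₁, …, η_p ∈ V₁ and ξ₁, …, ξ_q ∈ V₂ with p + q even, and consider the list z := ((η₁, 0), …, (η_p, 0), (0, ξ₁), …, (0, ξ_q)). Then: if p and q are both odd, A(z) = 0; and if p and q are both even, A(z) = A₁(η₁, …, η_p) · A₂(ξ₁, …, ξ_q). -/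

import Mathlib

/-- `κ^{|σ|}`: the sign of the permutation `σ` if `κ = -1`, and `1` if `κ = 1`. -/
noncomputable def ksgn (κ : ℂ) {n : ℕ} (σ : Equiv.Perm (Fin n)) : ℂ :=
  if κ = -1 then ((Equiv.Perm.sign σ : ℤ) : ℂ) else 1

/-- The free-field amplitude of a generating state given by an even-length list `z`:
`A(z₁, …, z_{2N}) = (1/N!) Σ_{σ ∈ S_{2N}} κ^{|σ|} Π_{j=1}^{N} B (z_{σ(j)}) (z_{σ(2N+1-j)})`
(for `N = 0` this equals `1`). -/
noncomputable def ampl (κ : ℂ) {V : Type*} [AddCommGroup V] [Module ℂ V]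
    (B : V →ₗ[ℂ] V →ₗ[ℂ] ℂ) (N : ℕ) (z : Fin (2 * N) → V) : ℂ :=
  (N.factorial : ℂ)⁻¹ * ∑ σ : Equiv.Perm (Fin (2 * N)), ksgn κ σ *
    ∏ j : Fin N,
      B (z (σ (Fin.castLE (by omega) j))) (z (σ (Fin.castLE (by omega : N ≤ 2 * N) j).rev))


/-! ### Auxiliary machinery for Statement 12 -/


open Equiv Finset

/-- position of slot `j` in the first half. -/
def cN {n : ℕ} (j : Fin n) : Fin (2*n) := Fin.castLE (by omega) j

/-- partner position of slot `j`. -/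
def rN {n : ℕ} (j : Fin n) : Fin (2*n) := (cN j).rev

@[simp] lemma val_cN {n : ℕ} (j : Fin n) : (cN j).val = j.val := rfl

@[simp] lemma val_rN {n : ℕ} (j : Fin n) : (rN j).val = 2*n - 1 - j.val := by
  simp [rN, cN, Fin.rev]; omega

lemma fin_filter_lt_card {n p : ℕ} (hp : p ≤ n) :
    (Finset.univ.filter fun i : Fin n => i.val < p).card = p := by
  have : (Finset.univ.filter fun i : Fin n => i.val < p)
      = Finset.univ.map (Fin.castLEEmb hp) := by
    ext x
    simp only [mem_filter, mem_univ, true_and, mem_map, Fin.castLEEmb_apply]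
    constructor
    · intro h; exact ⟨⟨x.val, h⟩, by ext; simp⟩
    · rintro ⟨a, rfl⟩; simpa using a.isLt
  simp [this]

/-- For a "compatible" permutation, `p` is twice the number of slots mapped into the
first block. -/
lemma compat_card {N p : ℕ} (hp : p ≤ 2*N) (σ : Equiv.Perm (Fin (2*N)))
    (hσ : ∀ j : Fin N, ((σ (cN j)).val < p ↔ (σ (rN j)).val < p)) :
    p = 2 * (Finset.univ.filter fun j : Fin N => (σ (cN j)).val < p).card := by
  classical
  set Sf := Finset.univ.filter fun j : Fin N => (σ (cN j)).val < p with hSf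
  set A := Finset.univ.filter fun x : Fin (2*N) => (σ x).val < p with hA
  have hAcard : A.card = p := by
    have himg : A.image σ = Finset.univ.filter fun y : Fin (2*N) => y.val < p := by
      ext y
      simp only [hA, mem_image, mem_filter, mem_univ, true_and]
      constructor
      · rintro ⟨x, hx, rfl⟩; exact hx
      · intro hy; exact ⟨σ.symm y, by simpa using hy, by simp⟩
    have := Finset.card_image_of_injective A σ.injective
    rw [himg] at this
    rw [← this, fin_filter_lt_card hp]
  have hcinj : Function.Injective (fun j : Fin N => cN j) := by
    intro a b h; apply Fin.ext; simpa [Fin.ext_iff] using h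
  have hrinj : Function.Injective (fun j : Fin N => rN j) := by
    intro a b h
    have := congrArg Fin.val h
    simp only [val_rN] at this
    apply Fin.ext; omega
  have e1 : A.filter (fun x => x.val < N) = Sf.map ⟨fun j => cN j, hcinj⟩ := by
    ext x
    simp only [hA, hSf, mem_filter, mem_univ, true_and, mem_map, Function.Embedding.coeFn_mk]
    constructor
    · rintro ⟨h1, h2⟩
      refine ⟨⟨x.val, h2⟩, ?_, by apply Fin.ext; simp⟩
      have hx : cN (⟨x.val, h2⟩ : Fin N) = x := by apply Fin.ext; simp
      rw [hx]; exact h1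
    · rintro ⟨j, hj, rfl⟩
      exact ⟨hj, by simpa using j.isLt⟩
  have e2 : A.filter (fun x => ¬ x.val < N) = Sf.map ⟨fun j => rN j, hrinj⟩ := by
    ext x
    simp only [hA, hSf, mem_filter, mem_univ, true_and, mem_map, Function.Embedding.coeFn_mk]
    constructor
    · rintro ⟨h1, h2⟩
      have hxlt := x.isLt
      refine ⟨⟨2*N - 1 - x.val, by omega⟩, ?_, by apply Fin.ext; simp; omega⟩
      have hx : rN (⟨2*N - 1 - x.val, by omega⟩ : Fin N) = x := by
        apply Fin.ext; simp; omega
      rw [hσ, hx]; exact h1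
    · rintro ⟨j, hj, rfl⟩
      have hjlt := j.isLt
      exact ⟨by rw [← hσ]; exact hj, by simp; omega⟩
  have h3 := Finset.card_filter_add_card_filter_not
    (s := A) (p := fun x : Fin (2*N) => x.val < N)
  rw [e1, e2, Finset.card_map, Finset.card_map, hAcard] at h3
  omega

section Zlem
variable {V₁ V₂ : Type*} [AddCommGroup V₁] [Module ℂ V₁] [AddCommGroup V₂] [Module ℂ V₂]

/-- the list `((η₁,0),…,(η_p,0),(0,ξ₁),…,(0,ξ_q))` as a function on `Fin (2*N)`. -/
def zfun (p q N : ℕ) (hpq : p + q = 2*N) (η : Fin p → V₁) (ξ : Fin q → V₂) :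
    Fin (2*N) → V₁ × V₂ :=
  fun i => Fin.append (fun j => (η j, (0 : V₂))) (fun j => ((0 : V₁), ξ j))
    (Fin.cast hpq.symm i)

lemma zfun_lo {p q N : ℕ} (hpq : p + q = 2*N) (η : Fin p → V₁) (ξ : Fin q → V₂)
    (i : Fin (2*N)) (h : i.val < p) :
    zfun p q N hpq η ξ i = (η ⟨i.val, h⟩, 0) := by
  have : Fin.cast hpq.symm i = Fin.castAdd q ⟨i.val, h⟩ := by apply Fin.ext; simp
  rw [zfun, this, Fin.append_left]

lemma zfun_hi {p q N : ℕ} (hpq : p + q = 2*N) (η : Fin p → V₁) (ξ : Fin q → V₂)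
    (i : Fin (2*N)) (h : ¬ i.val < p) :
    zfun p q N hpq η ξ i = (0, ξ ⟨i.val - p, by have := i.isLt; omega⟩) := by
  have : Fin.cast hpq.symm i = Fin.natAdd p ⟨i.val - p, by have := i.isLt; omega⟩ := by
    apply Fin.ext; simp; omega
  rw [zfun, this, Fin.append_right]

variable (B₁ : V₁ →ₗ[ℂ] V₁ →ₗ[ℂ] ℂ) (B₂ : V₂ →ₗ[ℂ] V₂ →ₗ[ℂ] ℂ)
  (B : (V₁ × V₂) →ₗ[ℂ] (V₁ × V₂) →ₗ[ℂ] ℂ)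
  (hB : ∀ z w : V₁ × V₂, B z w = B₁ z.1 w.1 + B₂ z.2 w.2)

include hB

lemma B_cross_zero {p q N : ℕ} (hpq : p + q = 2*N) (η : Fin p → V₁) (ξ : Fin q → V₂)
    (x y : Fin (2*N)) (h : ¬ (x.val < p ↔ y.val < p)) :
    B (zfun p q N hpq η ξ x) (zfun p q N hpq η ξ y) = 0 := by
  by_cases hx : x.val < p
  · have hy : ¬ y.val < p := fun hy => h ⟨fun _ => hy, fun _ => hx⟩
    rw [zfun_lo hpq η ξ x hx, zfun_hi hpq η ξ y hy, hB]
    simp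
  · have hy : y.val < p := by tauto
    rw [zfun_hi hpq η ξ x hx, zfun_lo hpq η ξ y hy, hB]
    simp

lemma B_lo_lo {p q N : ℕ} (hpq : p + q = 2*N) (η : Fin p → V₁) (ξ : Fin q → V₂)
    (x y : Fin (2*N)) (hx : x.val < p) (hy : y.val < p) :
    B (zfun p q N hpq η ξ x) (zfun p q N hpq η ξ y) = B₁ (η ⟨x.val, hx⟩) (η ⟨y.val, hy⟩) := by
  rw [zfun_lo hpq η ξ x hx, zfun_lo hpq η ξ y hy, hB]; simp

lemma B_hi_hi {p q N : ℕ} (hpq : p + q = 2*N) (η : Fin p → V₁) (ξ : Fin q → V₂)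
    (x y : Fin (2*N)) (hx : ¬ x.val < p) (hy : ¬ y.val < p) :
    B (zfun p q N hpq η ξ x) (zfun p q N hpq η ξ y) =
      B₂ (ξ ⟨x.val - p, by have := x.isLt; omega⟩) (ξ ⟨y.val - p, by have := y.isLt; omega⟩) := by
  rw [zfun_hi hpq η ξ x hx, zfun_hi hpq η ξ y hy, hB]; simp

lemma B_lo_lo' {p q N : ℕ} (hpq : p + q = 2*N) (η : Fin p → V₁) (ξ : Fin q → V₂)
    (x y : Fin (2*N)) (a b : Fin p) (hx : x.val = a.val) (hy : y.val = b.val) :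
    B (zfun p q N hpq η ξ x) (zfun p q N hpq η ξ y) = B₁ (η a) (η b) := by
  have hx' : x.val < p := by have := a.isLt; omega
  have hy' : y.val < p := by have := b.isLt; omega
  rw [B_lo_lo B₁ B₂ B hB hpq η ξ x y hx' hy']
  have ea : (⟨x.val, hx'⟩ : Fin p) = a := Fin.ext hx
  have eb : (⟨y.val, hy'⟩ : Fin p) = b := Fin.ext hy
  rw [ea, eb]

lemma B_hi_hi' {p q N : ℕ} (hpq : p + q = 2*N) (η : Fin p → V₁) (ξ : Fin q → V₂)
    (x y : Fin (2*N)) (a b : Fin q) (hx : x.val = p + a.val) (hy : y.val = p + b.val) :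
    B (zfun p q N hpq η ξ x) (zfun p q N hpq η ξ y) = B₂ (ξ a) (ξ b) := by
  have hx' : ¬ x.val < p := by omega
  have hy' : ¬ y.val < p := by omega
  rw [B_hi_hi B₁ B₂ B hB hpq η ξ x y hx' hy']
  have ea : (⟨x.val - p, by have := x.isLt; omega⟩ : Fin q) = a :=
    Fin.ext (by show x.val - p = a.val; omega)
  have eb : (⟨y.val - p, by have := y.isLt; omega⟩ : Fin q) = b :=
    Fin.ext (by show y.val - p = b.val; omega)
  rw [ea, eb]


end Zlem

lemma ksgn_one_apply {n : ℕ} (σ : Equiv.Perm (Fin n)) : ksgn 1 σ = 1 := by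
  rw [ksgn, if_neg]; intro h; exact one_ne_zero (by linear_combination h/2 : (1:ℂ) = 0)

lemma ksgn_of_sign_eq {κ : ℂ} {n m l : ℕ} {σ : Equiv.Perm (Fin n)}
    {σ₁ : Equiv.Perm (Fin m)} {σ₂ : Equiv.Perm (Fin l)}
    (h : Equiv.Perm.sign σ = Equiv.Perm.sign σ₁ * Equiv.Perm.sign σ₂) :
    ksgn κ σ = ksgn κ σ₁ * ksgn κ σ₂ := by
  unfold ksgn
  split_ifs with hk
  · rw [h]; push_cast; ring
  · ring

/-! ### The structural equivalences -/

/-- Embedding of the two blocks' positions: block 1 occupies the inner window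
`[Q, Q+2P)`, block 2 occupies `[0,Q) ∪ [Q+2P, 2(P+Q))`. -/
def eE (P Q : ℕ) : (Fin (2*P) ⊕ Fin (2*Q)) ≃ Fin (2*(P+Q)) where
  toFun x := Sum.elim
    (fun j => (⟨Q + j.val, by have := j.isLt; omega⟩ : Fin (2*(P+Q))))
    (fun k => if h : k.val < Q then (⟨k.val, by have := k.isLt; omega⟩ : Fin (2*(P+Q)))
      else ⟨2*P + k.val, by have := k.isLt; omega⟩) x
  invFun x := if h : x.val < Q then Sum.inr ⟨x.val, by have := x.isLt; omega⟩
    else if h2 : x.val < Q + 2*P then Sum.inl ⟨x.val - Q, by omega⟩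
    else Sum.inr ⟨x.val - 2*P, by have := x.isLt; omega⟩
  left_inv := by
    rintro (j | k)
    · have := j.isLt
      dsimp only [Sum.elim_inl]
      rw [dif_neg (by omega), dif_pos (by omega)]
      simp only [Sum.inl.injEq]
      apply Fin.ext; simp
    · have := k.isLt
      by_cases h : k.val < Q
      · simp only [Sum.elim_inr, dif_pos h]
      · simp only [Sum.elim_inr, dif_neg h]
        rw [dif_neg (by simp; omega), dif_neg (by simp; omega)]
        simp
  right_inv := by
    intro x
    have := x.isLt
    dsimp only
    by_cases h : x.val < Q
    · rw [dif_pos h]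
      simp only [Sum.elim_inr]
      rw [dif_pos (by simpa using h)]
    · rw [dif_neg h]
      by_cases h2 : x.val < Q + 2*P
      · rw [dif_pos h2]
        simp only [Sum.elim_inl]
        apply Fin.ext; simp; omega
      · rw [dif_neg h2]
        simp only [Sum.elim_inr]
        rw [dif_neg (by simp; omega)]
        apply Fin.ext; simp; omega

@[simp] lemma eE_inl {P Q : ℕ} (j : Fin (2*P)) : (eE P Q (Sum.inl j)).val = Q + j.val := rfl

lemma eE_inr_lt {P Q : ℕ} (k : Fin (2*Q)) (h : k.val < Q) :
    (eE P Q (Sum.inr k)).val = k.val := by simp [eE, h]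

lemma eE_inr_ge {P Q : ℕ} (k : Fin (2*Q)) (h : ¬ k.val < Q) :
    (eE P Q (Sum.inr k)).val = 2*P + k.val := by simp [eE, h]

/-- slot positions: `inl j ↦ cN j`, `inr j ↦ rN j`. -/
def epos (n : ℕ) : (Fin n ⊕ Fin n) ≃ Fin (2*n) where
  toFun x := Sum.elim (fun j => cN j) (fun j => rN j) x
  invFun x := if h : x.val < n then Sum.inl ⟨x.val, h⟩
    else Sum.inr ⟨2*n - 1 - x.val, by have := x.isLt; omega⟩
  left_inv := by
    rintro (j | j) <;> have := j.isLt
    · dsimp only [Sum.elim_inl]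
      rw [dif_pos (by simpa using this)]
      simp
    · dsimp only [Sum.elim_inr]
      rw [dif_neg (by simp; omega)]
      simp only [val_rN, Sum.inr.injEq]
      apply Fin.ext; simp; omega
  right_inv := by
    intro x
    have := x.isLt
    dsimp only
    by_cases h : x.val < n
    · rw [dif_pos h]; simp only [Sum.elim_inl]; apply Fin.ext; simp
    · rw [dif_neg h]; simp only [Sum.elim_inr]; apply Fin.ext; simp; omega

@[simp] lemma epos_inl {n : ℕ} (j : Fin n) : epos n (Sum.inl j) = cN j := rfl
@[simp] lemma epos_inr {n : ℕ} (j : Fin n) : epos n (Sum.inr j) = rN j := rfl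

/-- value of a power of `finRotate`. -/
lemma finRotate_pow_val {m : ℕ} (hm : 0 < m) (k : ℕ) (i : Fin m) :
    (((finRotate m)^k) i).val = (i.val + k) % m := by
  obtain ⟨m', rfl⟩ : ∃ m', m = m' + 1 := ⟨m - 1, by omega⟩
  induction k with
  | zero => simp [Nat.mod_eq_of_lt i.isLt]
  | succ k ih =>
      rw [pow_succ', Equiv.Perm.mul_apply, finRotate_succ_apply]
      rw [Fin.val_add, ih]
      rcases Nat.eq_zero_or_pos m' with rfl | hm'
      · simp [Nat.mod_one]
      · have h1 : (1 : Fin (m'+1)).val = 1 := by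
          rw [Fin.val_one']; exact Nat.mod_eq_of_lt (by omega)
        rw [h1, Nat.mod_add_mod, Nat.add_assoc]

/-- the window equivalence. -/
def Wequiv (P Q : ℕ) : (Fin (2*P+Q) ⊕ Fin Q) ≃ Fin (2*(P+Q)) :=
  finSumFinEquiv.trans (finCongr (by ring))

/-- the rotation permutation: rotates the window `[0, 2P+Q)` by `2P`, fixes the rest. -/
def rotP (P Q : ℕ) : Equiv.Perm (Fin (2*(P+Q))) :=
  (Wequiv P Q).permCongr
    (Equiv.Perm.sumCongr ((finRotate (2*P+Q))^(2*P)) (Equiv.refl (Fin Q)))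

lemma sign_rotP (P Q : ℕ) : Equiv.Perm.sign (rotP P Q) = 1 := by
  rw [rotP, Equiv.Perm.sign_permCongr, Equiv.Perm.sign_sumCongr, map_pow]
  have : (Equiv.Perm.sign (finRotate (2*P+Q)))^(2*P)
      = ((Equiv.Perm.sign (finRotate (2*P+Q)))^2)^P := by rw [← pow_mul]
  rw [this, Int.units_sq, one_pow]
  simp

lemma Wequiv_inl {P Q : ℕ} (a : Fin (2*P+Q)) : (Wequiv P Q (Sum.inl a)).val = a.val := by
  simp [Wequiv]

lemma Wequiv_inr {P Q : ℕ} (a : Fin Q) : (Wequiv P Q (Sum.inr a)).val = 2*P+Q + a.val := by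
  simp [Wequiv]

lemma rotP_eE_inl {P Q : ℕ} (j : Fin (2*P)) :
    (rotP P Q (eE P Q (Sum.inl j))).val = j.val := by
  have hj := j.isLt
  have h1 : (Wequiv P Q).symm (eE P Q (Sum.inl j)) = Sum.inl ⟨Q + j.val, by omega⟩ := by
    rw [Equiv.symm_apply_eq]
    apply Fin.ext
    rw [Wequiv_inl]; simp
  rw [rotP, Equiv.permCongr_apply, h1]
  simp only [Equiv.Perm.sumCongr_apply, Sum.map_inl]
  rw [Wequiv_inl, finRotate_pow_val (by omega)]
  show (Q + j.val + 2*P) % (2*P+Q) = j.val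
  have : Q + j.val + 2*P = (2*P+Q) + j.val := by ring
  rw [this, Nat.add_mod_left, Nat.mod_eq_of_lt (by omega)]

lemma rotP_eE_inr {P Q : ℕ} (k : Fin (2*Q)) :
    (rotP P Q (eE P Q (Sum.inr k))).val = 2*P + k.val := by
  have hk := k.isLt
  by_cases h : k.val < Q
  · have h1 : (Wequiv P Q).symm (eE P Q (Sum.inr k)) = Sum.inl ⟨k.val, by omega⟩ := by
      rw [Equiv.symm_apply_eq]
      apply Fin.ext
      rw [Wequiv_inl, eE_inr_lt k h]
    rw [rotP, Equiv.permCongr_apply, h1]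
    simp only [Equiv.Perm.sumCongr_apply, Sum.map_inl]
    rw [Wequiv_inl, finRotate_pow_val (by omega)]
    show (k.val + 2*P) % (2*P+Q) = 2*P + k.val
    rw [Nat.mod_eq_of_lt (by omega)]; ring
  · have h1 : (Wequiv P Q).symm (eE P Q (Sum.inr k)) = Sum.inr ⟨k.val - Q, by omega⟩ := by
      rw [Equiv.symm_apply_eq]
      apply Fin.ext
      rw [Wequiv_inr, eE_inr_ge k h]; simp; omega
    rw [rotP, Equiv.permCongr_apply, h1]
    simp only [Equiv.Perm.sumCongr_apply, Sum.map_inr, Equiv.refl_apply]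
    rw [Wequiv_inr]; simp; omega

/-! ### The slot-shuffling permutation -/

lemma compl_card {P Q : ℕ} (S : Finset (Fin (P+Q))) (hS : S.card = P) : Sᶜ.card = Q := by
  rw [Finset.card_compl, hS]; simp

/-- permutation of slots sending `[Q, P+Q)` onto `S` and `[0,Q)` onto `Sᶜ`. -/
def tauPerm (P Q : ℕ) (S : Finset (Fin (P+Q))) (hS : S.card = P) : Equiv.Perm (Fin (P+Q)) :=
  (finCongr (by omega : P+Q = Q+P)).trans <|
    finSumFinEquiv.symm.trans <|
      (Equiv.sumCongr ((Sᶜ.orderIsoOfFin (compl_card S hS)).toEquiv)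
        ((S.orderIsoOfFin hS).toEquiv)).trans <|
        (Equiv.sumComm _ _).trans <|
          (Equiv.sumCongr (Equiv.refl _)
            (Equiv.subtypeEquivRight (fun x => Finset.mem_compl))).trans <|
            Equiv.sumCompl (· ∈ S)

lemma tauPerm_mem_lo {P Q : ℕ} (S : Finset (Fin (P+Q))) (hS : S.card = P)
    (j : Fin (P+Q)) (h : j.val < Q) : tauPerm P Q S hS j ∉ S := by
  have h0 : finCongr (by omega : P+Q = Q+P) j = Fin.castAdd P (⟨j.val, h⟩ : Fin Q) := by
    apply Fin.ext; simp
  rw [tauPerm]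
  simp only [Equiv.trans_apply, h0, finSumFinEquiv_symm_apply_castAdd]
  simp only [Equiv.sumCongr_apply, Sum.map_inl, Equiv.sumComm_apply, Sum.swap_inl,
    Sum.map_inr, Equiv.sumCompl_apply_inr]
  exact (Equiv.subtypeEquivRight (fun x => Finset.mem_compl)
    ((Sᶜ.orderIsoOfFin (compl_card S hS)).toEquiv ⟨j.val, h⟩)).2

lemma tauPerm_mem_hi {P Q : ℕ} (S : Finset (Fin (P+Q))) (hS : S.card = P)
    (j : Fin (P+Q)) (h : ¬ j.val < Q) : tauPerm P Q S hS j ∈ S := by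
  have hj := j.isLt
  have h0 : finCongr (by omega : P+Q = Q+P) j = Fin.natAdd Q (⟨j.val - Q, by omega⟩ : Fin P) := by
    apply Fin.ext; simp; omega
  rw [tauPerm]
  simp only [Equiv.trans_apply, h0, finSumFinEquiv_symm_apply_natAdd]
  simp only [Equiv.sumCongr_apply, Sum.map_inr, Equiv.sumComm_apply, Sum.swap_inr,
    Sum.map_inl, Equiv.refl_apply, Equiv.sumCompl_apply_inl]
  exact ((S.orderIsoOfFin hS).toEquiv ⟨j.val - Q, by omega⟩).2

/-- the position permutation induced by a slot permutation (acting simultaneously on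
both members of each slot pair). -/
def rhoPerm (P Q : ℕ) (S : Finset (Fin (P+Q))) (hS : S.card = P) :
    Equiv.Perm (Fin (2*(P+Q))) :=
  (epos (P+Q)).permCongr (Equiv.Perm.sumCongr (tauPerm P Q S hS) (tauPerm P Q S hS))

lemma rhoPerm_c {P Q : ℕ} (S : Finset (Fin (P+Q))) (hS : S.card = P) (j : Fin (P+Q)) :
    rhoPerm P Q S hS (cN j) = cN (tauPerm P Q S hS j) := by
  have h0 : (epos (P+Q)).symm (cN j) = Sum.inl j := by
    rw [Equiv.symm_apply_eq]; simp
  rw [rhoPerm, Equiv.permCongr_apply, h0]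
  simp

lemma rhoPerm_r {P Q : ℕ} (S : Finset (Fin (P+Q))) (hS : S.card = P) (j : Fin (P+Q)) :
    rhoPerm P Q S hS (rN j) = rN (tauPerm P Q S hS j) := by
  have h0 : (epos (P+Q)).symm (rN j) = Sum.inr j := by
    rw [Equiv.symm_apply_eq]; simp
  rw [rhoPerm, Equiv.permCongr_apply, h0]
  simp

lemma sign_rhoPerm {P Q : ℕ} (S : Finset (Fin (P+Q))) (hS : S.card = P) :
    Equiv.Perm.sign (rhoPerm P Q S hS) = 1 := by
  rw [rhoPerm, Equiv.Perm.sign_permCongr, Equiv.Perm.sign_sumCongr, Int.units_mul_self]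

/-- the block-diagonal position permutation induced by `σ₁, σ₂`. -/
def scPerm (P Q : ℕ) (σ₁ : Equiv.Perm (Fin (2*P))) (σ₂ : Equiv.Perm (Fin (2*Q))) :
    Equiv.Perm (Fin (2*(P+Q))) :=
  (eE P Q).permCongr (Equiv.Perm.sumCongr σ₁ σ₂)

lemma scPerm_inl {P Q : ℕ} (σ₁ : Equiv.Perm (Fin (2*P))) (σ₂ : Equiv.Perm (Fin (2*Q)))
    (j : Fin (2*P)) : scPerm P Q σ₁ σ₂ (eE P Q (Sum.inl j)) = eE P Q (Sum.inl (σ₁ j)) := by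
  rw [scPerm, Equiv.permCongr_apply, Equiv.symm_apply_apply]; simp

lemma scPerm_inr {P Q : ℕ} (σ₁ : Equiv.Perm (Fin (2*P))) (σ₂ : Equiv.Perm (Fin (2*Q)))
    (k : Fin (2*Q)) : scPerm P Q σ₁ σ₂ (eE P Q (Sum.inr k)) = eE P Q (Sum.inr (σ₂ k)) := by
  rw [scPerm, Equiv.permCongr_apply, Equiv.symm_apply_apply]; simp

/-- The gluing map: from `(S, σ₁, σ₂)` to a permutation of all positions. -/
def PhiPerm (P Q : ℕ) (S : Finset (Fin (P+Q))) (hS : S.card = P)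
    (σ₁ : Equiv.Perm (Fin (2*P))) (σ₂ : Equiv.Perm (Fin (2*Q))) :
    Equiv.Perm (Fin (2*(P+Q))) :=
  rotP P Q * scPerm P Q σ₁ σ₂ * (rhoPerm P Q S hS)⁻¹

lemma sign_PhiPerm {P Q : ℕ} (S : Finset (Fin (P+Q))) (hS : S.card = P)
    (σ₁ : Equiv.Perm (Fin (2*P))) (σ₂ : Equiv.Perm (Fin (2*Q))) :
    Equiv.Perm.sign (PhiPerm P Q S hS σ₁ σ₂) = Equiv.Perm.sign σ₁ * Equiv.Perm.sign σ₂ := by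
  rw [PhiPerm, map_mul, map_mul, map_inv, sign_rotP, sign_rhoPerm, scPerm,
    Equiv.Perm.sign_permCongr, Equiv.Perm.sign_sumCongr]
  simp

/-- `Φ` evaluated on a first-block slot pair, after the slot shuffle. -/
lemma PhiPerm_apply_c {P Q : ℕ} (S : Finset (Fin (P+Q))) (hS : S.card = P)
    (σ₁ : Equiv.Perm (Fin (2*P))) (σ₂ : Equiv.Perm (Fin (2*Q))) (j : Fin (P+Q)) :
    PhiPerm P Q S hS σ₁ σ₂ (cN (tauPerm P Q S hS j))
      = rotP P Q (scPerm P Q σ₁ σ₂ (cN j)) := by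
  have : (rhoPerm P Q S hS)⁻¹ (cN (tauPerm P Q S hS j)) = cN j := by
    rw [← rhoPerm_c S hS j]; simp
  rw [PhiPerm, Equiv.Perm.mul_apply, Equiv.Perm.mul_apply, this]

lemma PhiPerm_apply_r {P Q : ℕ} (S : Finset (Fin (P+Q))) (hS : S.card = P)
    (σ₁ : Equiv.Perm (Fin (2*P))) (σ₂ : Equiv.Perm (Fin (2*Q))) (j : Fin (P+Q)) :
    PhiPerm P Q S hS σ₁ σ₂ (rN (tauPerm P Q S hS j))
      = rotP P Q (scPerm P Q σ₁ σ₂ (rN j)) := by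
  have : (rhoPerm P Q S hS)⁻¹ (rN (tauPerm P Q S hS j)) = rN j := by
    rw [← rhoPerm_r S hS j]; simp
  rw [PhiPerm, Equiv.Perm.mul_apply, Equiv.Perm.mul_apply, this]

/-! ### Pointwise values of `Ψ = rot ∘ sc` on slot pairs -/

lemma cN_eq_eE_inl {P Q : ℕ} (k : Fin P) :
    cN (⟨Q + k.val, by have := k.isLt; omega⟩ : Fin (P+Q))
      = eE P Q (Sum.inl (Fin.castLE (by omega) k)) := by
  apply Fin.ext; simp

lemma rN_eq_eE_inl {P Q : ℕ} (k : Fin P) :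
    rN (⟨Q + k.val, by have := k.isLt; omega⟩ : Fin (P+Q))
      = eE P Q (Sum.inl (Fin.castLE (by omega : P ≤ 2*P) k).rev) := by
  have := k.isLt
  apply Fin.ext
  simp [Fin.rev]
  omega

lemma cN_eq_eE_inr {P Q : ℕ} (k : Fin Q) :
    cN (⟨k.val, by have := k.isLt; omega⟩ : Fin (P+Q))
      = eE P Q (Sum.inr (Fin.castLE (by omega) k)) := by
  have := k.isLt
  apply Fin.ext
  rw [eE_inr_lt _ (by simpa using this)]
  simp

lemma rN_eq_eE_inr {P Q : ℕ} (k : Fin Q) :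
    rN (⟨k.val, by have := k.isLt; omega⟩ : Fin (P+Q))
      = eE P Q (Sum.inr (Fin.castLE (by omega : Q ≤ 2*Q) k).rev) := by
  have := k.isLt
  apply Fin.ext
  rw [eE_inr_ge _ (by simp [Fin.rev]; omega)]
  simp [Fin.rev]
  omega

/-- value of `Ψ` on the opening position of slot `Q+k` : it is `σ₁ k` (in block 1). -/
lemma psi_c_blk1 {P Q : ℕ} (σ₁ : Equiv.Perm (Fin (2*P))) (σ₂ : Equiv.Perm (Fin (2*Q)))
    (k : Fin P) :
    (rotP P Q (scPerm P Q σ₁ σ₂ (cN (⟨Q + k.val, by have := k.isLt; omega⟩ : Fin (P+Q))))).val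
      = (σ₁ (Fin.castLE (by omega) k)).val := by
  rw [cN_eq_eE_inl, scPerm_inl, rotP_eE_inl]

lemma psi_r_blk1 {P Q : ℕ} (σ₁ : Equiv.Perm (Fin (2*P))) (σ₂ : Equiv.Perm (Fin (2*Q)))
    (k : Fin P) :
    (rotP P Q (scPerm P Q σ₁ σ₂ (rN (⟨Q + k.val, by have := k.isLt; omega⟩ : Fin (P+Q))))).val
      = (σ₁ (Fin.castLE (by omega : P ≤ 2*P) k).rev).val := by
  rw [rN_eq_eE_inl, scPerm_inl, rotP_eE_inl]

lemma psi_c_blk2 {P Q : ℕ} (σ₁ : Equiv.Perm (Fin (2*P))) (σ₂ : Equiv.Perm (Fin (2*Q)))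
    (k : Fin Q) :
    (rotP P Q (scPerm P Q σ₁ σ₂ (cN (⟨k.val, by have := k.isLt; omega⟩ : Fin (P+Q))))).val
      = 2*P + (σ₂ (Fin.castLE (by omega) k)).val := by
  rw [cN_eq_eE_inr, scPerm_inr, rotP_eE_inr]

lemma psi_r_blk2 {P Q : ℕ} (σ₁ : Equiv.Perm (Fin (2*P))) (σ₂ : Equiv.Perm (Fin (2*Q)))
    (k : Fin Q) :
    (rotP P Q (scPerm P Q σ₁ σ₂ (rN (⟨k.val, by have := k.isLt; omega⟩ : Fin (P+Q))))).val
      = 2*P + (σ₂ (Fin.castLE (by omega : Q ≤ 2*Q) k).rev).val := by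
  rw [rN_eq_eE_inr, scPerm_inr, rotP_eE_inr]

/-! ### Decomposition of compatible permutations -/

set_option maxHeartbeats 1600000 in
lemma psi_lt_iff {P Q : ℕ} (σ₁ : Equiv.Perm (Fin (2*P))) (σ₂ : Equiv.Perm (Fin (2*Q)))
    (j₀ : Fin (P+Q)) :
    ((rotP P Q (scPerm P Q σ₁ σ₂ (cN j₀))).val < 2*P ↔ ¬ j₀.val < Q)
    ∧ ((rotP P Q (scPerm P Q σ₁ σ₂ (rN j₀))).val < 2*P ↔ ¬ j₀.val < Q) := by
  have hj₀ := j₀.isLt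
  by_cases h : j₀.val < Q
  · have hj : j₀ = (⟨(⟨j₀.val, h⟩ : Fin Q).val, by omega⟩ : Fin (P+Q)) := Fin.ext rfl
    constructor
    · rw [hj, psi_c_blk2 σ₁ σ₂ ⟨j₀.val, h⟩]
      constructor <;> intro hx <;> omega
    · rw [hj, psi_r_blk2 σ₁ σ₂ ⟨j₀.val, h⟩]
      constructor <;> intro hx <;> omega
  · have hj : j₀ = (⟨Q + (⟨j₀.val - Q, by omega⟩ : Fin P).val, by omega⟩ : Fin (P+Q)) :=
      Fin.ext (by simp; omega)
    constructor
    · rw [hj, psi_c_blk1 σ₁ σ₂ ⟨j₀.val - Q, by omega⟩]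
      have h1 := (σ₁ (Fin.castLE (by omega) (⟨j₀.val - Q, by omega⟩ : Fin P))).isLt
      constructor <;> intro hx <;> omega
    · rw [hj, psi_r_blk1 σ₁ σ₂ ⟨j₀.val - Q, by omega⟩]
      have h2 := (σ₁ (Fin.castLE (by omega : P ≤ 2*P) (⟨j₀.val - Q, by omega⟩ : Fin P)).rev).isLt
      constructor <;> intro hx <;> omega

lemma Phi_mem_val {P Q : ℕ} (S : Finset (Fin (P+Q))) (hS : S.card = P)
    (σ₁ : Equiv.Perm (Fin (2*P))) (σ₂ : Equiv.Perm (Fin (2*Q))) (j : Fin (P+Q)) :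
    ((PhiPerm P Q S hS σ₁ σ₂ (cN j)).val < 2*P ↔ j ∈ S)
    ∧ ((PhiPerm P Q S hS σ₁ σ₂ (rN j)).val < 2*P ↔ j ∈ S) := by
  obtain ⟨j₀, rfl⟩ : ∃ j₀, tauPerm P Q S hS j₀ = j :=
    ⟨(tauPerm P Q S hS).symm j, by simp⟩
  rw [PhiPerm_apply_c, PhiPerm_apply_r]
  rw [(psi_lt_iff σ₁ σ₂ j₀).1, (psi_lt_iff σ₁ σ₂ j₀).2]
  by_cases h : j₀.val < Q
  · have := tauPerm_mem_lo S hS j₀ h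
    constructor <;> constructor <;> intro hx <;> tauto
  · have := tauPerm_mem_hi S hS j₀ h
    constructor <;> constructor <;> intro hx <;> tauto

lemma Phi_inj {P Q : ℕ} (S : Finset (Fin (P+Q))) (hS : S.card = P)
    (σ₁ : Equiv.Perm (Fin (2*P))) (σ₂ : Equiv.Perm (Fin (2*Q)))
    (S' : Finset (Fin (P+Q))) (hS' : S'.card = P)
    (σ₁' : Equiv.Perm (Fin (2*P))) (σ₂' : Equiv.Perm (Fin (2*Q)))
    (h : PhiPerm P Q S hS σ₁ σ₂ = PhiPerm P Q S' hS' σ₁' σ₂') :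
    S = S' ∧ σ₁ = σ₁' ∧ σ₂ = σ₂' := by
  have hSS : S = S' := by
    ext j
    rw [← (Phi_mem_val S hS σ₁ σ₂ j).1, ← (Phi_mem_val S' hS' σ₁' σ₂' j).1, h]
  subst hSS
  have hE : hS = hS' := Subsingleton.elim _ _
  subst hE
  refine ⟨rfl, ?_, ?_⟩
  · have hsc : scPerm P Q σ₁ σ₂ = scPerm P Q σ₁' σ₂' := by
      rw [PhiPerm, PhiPerm] at h
      exact mul_left_cancel (mul_right_cancel h)
    apply Equiv.ext; intro k
    exact Sum.inl_injective ((eE P Q).injective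
      (by rw [← scPerm_inl σ₁ σ₂ k, ← scPerm_inl σ₁' σ₂' k, hsc]))
  · have hsc : scPerm P Q σ₁ σ₂ = scPerm P Q σ₁' σ₂' := by
      rw [PhiPerm, PhiPerm] at h
      exact mul_left_cancel (mul_right_cancel h)
    apply Equiv.ext; intro k
    exact Sum.inr_injective ((eE P Q).injective
      (by rw [← scPerm_inr σ₁ σ₂ k, ← scPerm_inr σ₁' σ₂' k, hsc]))

lemma Phi_surj {P Q : ℕ} (σ : Equiv.Perm (Fin (2*(P+Q))))
    (hσ : ∀ j : Fin (P+Q), ((σ (cN j)).val < 2*P ↔ (σ (rN j)).val < 2*P)) :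
    ∃ (S : Finset (Fin (P+Q))) (hS : S.card = P) (σ₁ : Equiv.Perm (Fin (2*P)))
      (σ₂ : Equiv.Perm (Fin (2*Q))), PhiPerm P Q S hS σ₁ σ₂ = σ := by
  classical
  set Sf := Finset.univ.filter (fun j : Fin (P+Q) => (σ (cN j)).val < 2*P) with hSfdef
  have hcard : Sf.card = P := by
    have h0 := compat_card (N := P+Q) (p := 2*P) (by omega) σ hσ
    rw [hSfdef]
    omega
  have key1 : ∀ k : Fin (2*P), (σ (rhoPerm P Q Sf hcard (eE P Q (Sum.inl k)))).val < 2*P := by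
    intro k
    have hk := k.isLt
    by_cases h : k.val < P
    · have h1 : eE P Q (Sum.inl k) = cN (⟨Q + k.val, by omega⟩ : Fin (P+Q)) := by
        apply Fin.ext; simp
      rw [h1, rhoPerm_c]
      have hmem := tauPerm_mem_hi Sf hcard ⟨Q + k.val, by omega⟩ (by simp)
      exact (Finset.mem_filter.1 hmem).2
    · have h1 : eE P Q (Sum.inl k) = rN (⟨Q + (2*P - 1 - k.val), by omega⟩ : Fin (P+Q)) := by
        apply Fin.ext; simp; omega
      rw [h1, rhoPerm_r, ← hσ]
      have hmem := tauPerm_mem_hi Sf hcard ⟨Q + (2*P - 1 - k.val), by omega⟩ (by simp)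
      exact (Finset.mem_filter.1 hmem).2
  have key2 : ∀ k : Fin (2*Q), ¬ (σ (rhoPerm P Q Sf hcard (eE P Q (Sum.inr k)))).val < 2*P := by
    intro k
    have hk := k.isLt
    by_cases h : k.val < Q
    · have h1 : eE P Q (Sum.inr k) = cN (⟨k.val, by omega⟩ : Fin (P+Q)) := by
        apply Fin.ext; rw [eE_inr_lt _ h]; simp
      rw [h1, rhoPerm_c]
      have hmem := tauPerm_mem_lo Sf hcard ⟨k.val, by omega⟩ (by simpa using h)
      exact fun hc => hmem (Finset.mem_filter.2 ⟨Finset.mem_univ _, hc⟩)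
    · have h1 : eE P Q (Sum.inr k) = rN (⟨2*Q - 1 - k.val, by omega⟩ : Fin (P+Q)) := by
        apply Fin.ext; rw [eE_inr_ge _ h]; simp; omega
      rw [h1, rhoPerm_r, ← hσ]
      have hmem := tauPerm_mem_lo Sf hcard ⟨2*Q - 1 - k.val, by omega⟩ (by simp; omega)
      exact fun hc => hmem (Finset.mem_filter.2 ⟨Finset.mem_univ _, hc⟩)
  have inj1 : Function.Injective
      (fun k : Fin (2*P) => (⟨(σ (rhoPerm P Q Sf hcard (eE P Q (Sum.inl k)))).val, key1 k⟩
        : Fin (2*P))) := by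
    intro a b hab
    simp only [Fin.mk.injEq] at hab
    exact Sum.inl_injective ((eE P Q).injective
      ((rhoPerm P Q Sf hcard).injective (σ.injective (Fin.ext hab))))
  have inj2 : Function.Injective
      (fun k : Fin (2*Q) => (⟨(σ (rhoPerm P Q Sf hcard (eE P Q (Sum.inr k)))).val - 2*P,
        by have := (σ (rhoPerm P Q Sf hcard (eE P Q (Sum.inr k)))).isLt
           have hk := k.isLt; omega⟩
        : Fin (2*Q))) := by
    intro a b hab
    simp only [Fin.mk.injEq] at hab
    have h2a := key2 a
    have h2b := key2 b
    have hab' : (σ (rhoPerm P Q Sf hcard (eE P Q (Sum.inr a)))).val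
        = (σ (rhoPerm P Q Sf hcard (eE P Q (Sum.inr b)))).val := by omega
    exact Sum.inr_injective ((eE P Q).injective
      ((rhoPerm P Q Sf hcard).injective (σ.injective (Fin.ext hab'))))
  refine ⟨Sf, hcard, Equiv.ofBijective _ (Finite.injective_iff_bijective.1 inj1),
    Equiv.ofBijective _ (Finite.injective_iff_bijective.1 inj2), ?_⟩
  apply Equiv.ext
  intro x
  obtain ⟨y, rfl⟩ : ∃ y, rhoPerm P Q Sf hcard (eE P Q y) = x :=
    ⟨(eE P Q).symm ((rhoPerm P Q Sf hcard).symm x), by simp⟩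
  rw [PhiPerm, Equiv.Perm.mul_apply, Equiv.Perm.mul_apply]
  have hinv : (rhoPerm P Q Sf hcard)⁻¹ (rhoPerm P Q Sf hcard (eE P Q y)) = eE P Q y :=
    by simp
  rw [hinv]
  cases y with
  | inl k =>
      rw [scPerm_inl]
      apply Fin.ext
      rw [rotP_eE_inl]
      rfl
  | inr k =>
      rw [scPerm_inr]
      apply Fin.ext
      rw [rotP_eE_inr]
      have hk2 := key2 k
      have h2 := (σ (rhoPerm P Q Sf hcard (eE P Q (Sum.inr k)))).isLt
      show 2*P + ((σ (rhoPerm P Q Sf hcard (eE P Q (Sum.inr k)))).val - 2*P) = _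
      omega

/-! ### The value of the amplitude term at a glued permutation -/

section Key
variable {V₁ V₂ : Type*} [AddCommGroup V₁] [Module ℂ V₁] [AddCommGroup V₂] [Module ℂ V₂]
  (κ : ℂ)
  (B₁ : V₁ →ₗ[ℂ] V₁ →ₗ[ℂ] ℂ) (B₂ : V₂ →ₗ[ℂ] V₂ →ₗ[ℂ] ℂ)
  (B : (V₁ × V₂) →ₗ[ℂ] (V₁ × V₂) →ₗ[ℂ] ℂ)

lemma term_val (hB : ∀ z w : V₁ × V₂, B z w = B₁ z.1 w.1 + B₂ z.2 w.2)
    {P Q : ℕ} (η : Fin (2*P) → V₁) (ξ : Fin (2*Q) → V₂)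
    (hpq : 2*P + 2*Q = 2*(P+Q))
    (S : Finset (Fin (P+Q))) (hS : S.card = P)
    (σ₁ : Equiv.Perm (Fin (2*P))) (σ₂ : Equiv.Perm (Fin (2*Q))) :
    (ksgn κ (PhiPerm P Q S hS σ₁ σ₂) * ∏ j : Fin (P+Q),
        B (zfun (2*P) (2*Q) (P+Q) hpq η ξ (PhiPerm P Q S hS σ₁ σ₂ (cN j)))
          (zfun (2*P) (2*Q) (P+Q) hpq η ξ (PhiPerm P Q S hS σ₁ σ₂ (rN j))))
    = (ksgn κ σ₁ * ∏ k : Fin P,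
          B₁ (η (σ₁ (Fin.castLE (by omega) k))) (η (σ₁ (Fin.castLE (by omega : P ≤ 2*P) k).rev)))
      * (ksgn κ σ₂ * ∏ k : Fin Q,
          B₂ (ξ (σ₂ (Fin.castLE (by omega) k))) (ξ (σ₂ (Fin.castLE (by omega : Q ≤ 2*Q) k).rev))) := by
  have hks : ksgn κ (PhiPerm P Q S hS σ₁ σ₂) = ksgn κ σ₁ * ksgn κ σ₂ :=
    ksgn_of_sign_eq (sign_PhiPerm S hS σ₁ σ₂)
  set z := zfun (2*P) (2*Q) (P+Q) hpq η ξ with hz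
  set F : Fin (P+Q) → ℂ := fun j =>
    B (z (PhiPerm P Q S hS σ₁ σ₂ (cN j))) (z (PhiPerm P Q S hS σ₁ σ₂ (rN j))) with hF
  set G : Fin (P+Q) → ℂ := fun j =>
    B (z (rotP P Q (scPerm P Q σ₁ σ₂ (cN j)))) (z (rotP P Q (scPerm P Q σ₁ σ₂ (rN j)))) with hG
  have hFG : ∏ j : Fin (P+Q), F j = ∏ j : Fin (P+Q), G j := by
    rw [← Equiv.prod_comp (tauPerm P Q S hS) F]
    refine Finset.prod_congr rfl fun j _ => ?_
    rw [hF, hG]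
    simp only []
    rw [PhiPerm_apply_c, PhiPerm_apply_r]
  have hsplit : ∏ j : Fin (P+Q), G j
      = (∏ k : Fin Q, G (finCongr (by omega : Q+P = P+Q) (Fin.castAdd P k)))
        * ∏ k : Fin P, G (finCongr (by omega : Q+P = P+Q) (Fin.natAdd Q k)) := by
    rw [← (Fintype.prod_equiv (finCongr (by omega : Q+P = P+Q))
      (fun i => G (finCongr (by omega : Q+P = P+Q) i)) G (fun i => rfl)),
      Fin.prod_univ_add]
  have hblk2 : ∀ k : Fin Q, G (finCongr (by omega : Q+P = P+Q) (Fin.castAdd P k))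
      = B₂ (ξ (σ₂ (Fin.castLE (by omega) k))) (ξ (σ₂ (Fin.castLE (by omega : Q ≤ 2*Q) k).rev)) := by
    intro k
    have hk := k.isLt
    have hjk : finCongr (by omega : Q+P = P+Q) (Fin.castAdd P k)
        = (⟨k.val, by omega⟩ : Fin (P+Q)) := Fin.ext (by simp)
    rw [hG]
    simp only []
    rw [hjk, hz]
    exact B_hi_hi' B₁ B₂ B hB hpq η ξ _ _ _ _ (psi_c_blk2 σ₁ σ₂ k) (psi_r_blk2 σ₁ σ₂ k)
  have hblk1 : ∀ k : Fin P, G (finCongr (by omega : Q+P = P+Q) (Fin.natAdd Q k))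
      = B₁ (η (σ₁ (Fin.castLE (by omega) k))) (η (σ₁ (Fin.castLE (by omega : P ≤ 2*P) k).rev)) := by
    intro k
    have hk := k.isLt
    have hjk : finCongr (by omega : Q+P = P+Q) (Fin.natAdd Q k)
        = (⟨Q + k.val, by omega⟩ : Fin (P+Q)) := Fin.ext (by simp; omega)
    rw [hG]
    simp only []
    rw [hjk, hz]
    exact B_lo_lo' B₁ B₂ B hB hpq η ξ _ _ _ _ (psi_c_blk1 σ₁ σ₂ k) (psi_r_blk1 σ₁ σ₂ k)
  rw [hks, hFG, hsplit, Finset.prod_congr rfl (fun k _ => hblk2 k),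
    Finset.prod_congr rfl (fun k _ => hblk1 k)]
  ring

set_option maxHeartbeats 1000000 in
lemma key_even (hκ : κ = 1 ∨ κ = -1)
    (hB : ∀ z w : V₁ × V₂, B z w = B₁ z.1 w.1 + B₂ z.2 w.2)
    (P Q : ℕ) (η : Fin (2*P) → V₁) (ξ : Fin (2*Q) → V₂)
    (hpq : 2*P + 2*Q = 2*(P+Q)) :
    ampl κ B (P+Q) (zfun (2*P) (2*Q) (P+Q) hpq η ξ) = ampl κ B₁ P η * ampl κ B₂ Q ξ := by
  classical
  set z := zfun (2*P) (2*Q) (P+Q) hpq η ξ with hz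
  set T : Equiv.Perm (Fin (2*(P+Q))) → ℂ := fun σ =>
    ksgn κ σ * ∏ j : Fin (P+Q), B (z (σ (cN j))) (z (σ (rN j))) with hT
  have hL : ampl κ B (P+Q) z
      = ((P+Q).factorial : ℂ)⁻¹ * ∑ σ : Equiv.Perm (Fin (2*(P+Q))), T σ := rfl
  set comp : Finset (Equiv.Perm (Fin (2*(P+Q)))) := Finset.univ.filter
    (fun σ => ∀ j : Fin (P+Q), ((σ (cN j)).val < 2*P ↔ (σ (rN j)).val < 2*P)) with hcomp
  have hzero : ∀ σ ∈ (Finset.univ : Finset (Equiv.Perm (Fin (2*(P+Q))))),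
      σ ∉ comp → T σ = 0 := by
    intro σ _ hσ
    rw [hcomp, Finset.mem_filter] at hσ
    simp only [Finset.mem_univ, true_and] at hσ
    obtain ⟨j, hj⟩ := not_forall.1 hσ
    have h0 : B (z (σ (cN j))) (z (σ (rN j))) = 0 := by
      rw [hz]
      exact B_cross_zero B₁ B₂ B hB hpq η ξ _ _ hj
    rw [hT]
    simp only []
    exact mul_eq_zero_of_right _ (Finset.prod_eq_zero (Finset.mem_univ j) h0)
  have hstep1 : ∑ σ ∈ comp, T σ = ∑ σ : Equiv.Perm (Fin (2*(P+Q))), T σ :=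
    Finset.sum_subset (Finset.subset_univ comp) hzero
  have hstep2 : ∑ x : ({S : Finset (Fin (P+Q)) // S.card = P}
        × Equiv.Perm (Fin (2*P)) × Equiv.Perm (Fin (2*Q))),
      T (PhiPerm P Q x.1.1 x.1.2 x.2.1 x.2.2) = ∑ σ ∈ comp, T σ := by
    apply Finset.sum_bij (fun x _ => PhiPerm P Q x.1.1 x.1.2 x.2.1 x.2.2)
    · intro x _
      rw [hcomp, Finset.mem_filter]
      refine ⟨Finset.mem_univ _, fun j => ?_⟩
      exact Iff.trans (Phi_mem_val x.1.1 x.1.2 x.2.1 x.2.2 j).1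
        ((Phi_mem_val x.1.1 x.1.2 x.2.1 x.2.2 j).2).symm
    · intro x _ y _ hxy
      obtain ⟨h1, h2, h3⟩ := Phi_inj _ _ _ _ _ _ _ _ hxy
      exact Prod.ext (Subtype.ext h1) (Prod.ext h2 h3)
    · intro σ hσ
      rw [hcomp, Finset.mem_filter] at hσ
      obtain ⟨S, hS, σ₁, σ₂, hPhi⟩ := Phi_surj σ hσ.2
      exact ⟨(⟨S, hS⟩, σ₁, σ₂), Finset.mem_univ _, hPhi⟩
    · intro x _; rfl
  have hstep3 : ∑ x : ({S : Finset (Fin (P+Q)) // S.card = P}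
        × Equiv.Perm (Fin (2*P)) × Equiv.Perm (Fin (2*Q))),
      T (PhiPerm P Q x.1.1 x.1.2 x.2.1 x.2.2)
      = ((P+Q).choose P : ℂ) *
        ((∑ σ₁ : Equiv.Perm (Fin (2*P)), ksgn κ σ₁ * ∏ k : Fin P,
            B₁ (η (σ₁ (Fin.castLE (by omega) k)))
               (η (σ₁ (Fin.castLE (by omega : P ≤ 2*P) k).rev)))
        * (∑ σ₂ : Equiv.Perm (Fin (2*Q)), ksgn κ σ₂ * ∏ k : Fin Q,
            B₂ (ξ (σ₂ (Fin.castLE (by omega) k)))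
               (ξ (σ₂ (Fin.castLE (by omega : Q ≤ 2*Q) k).rev)))) := by
    have hmul : (∑ y : Equiv.Perm (Fin (2*P)) × Equiv.Perm (Fin (2*Q)),
          ((ksgn κ y.1 * ∏ k : Fin P,
            B₁ (η (y.1 (Fin.castLE (by omega) k)))
               (η (y.1 (Fin.castLE (by omega : P ≤ 2*P) k).rev))) * (ksgn κ y.2 * ∏ k : Fin Q,
            B₂ (ξ (y.2 (Fin.castLE (by omega) k)))
               (ξ (y.2 (Fin.castLE (by omega : Q ≤ 2*Q) k).rev)))))
        = (∑ σ₁ : Equiv.Perm (Fin (2*P)), (ksgn κ σ₁ * ∏ k : Fin P,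
            B₁ (η (σ₁ (Fin.castLE (by omega) k)))
               (η (σ₁ (Fin.castLE (by omega : P ≤ 2*P) k).rev))))
          * (∑ σ₂ : Equiv.Perm (Fin (2*Q)), (ksgn κ σ₂ * ∏ k : Fin Q,
            B₂ (ξ (σ₂ (Fin.castLE (by omega) k)))
               (ξ (σ₂ (Fin.castLE (by omega : Q ≤ 2*Q) k).rev)))) := by
      rw [Fintype.sum_prod_type]
      exact (Fintype.sum_mul_sum
        (fun σ₁ : Equiv.Perm (Fin (2*P)) => (ksgn κ σ₁ * ∏ k : Fin P,
            B₁ (η (σ₁ (Fin.castLE (by omega) k)))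
               (η (σ₁ (Fin.castLE (by omega : P ≤ 2*P) k).rev))))
        (fun σ₂ : Equiv.Perm (Fin (2*Q)) => (ksgn κ σ₂ * ∏ k : Fin Q,
            B₂ (ξ (σ₂ (Fin.castLE (by omega) k)))
               (ξ (σ₂ (Fin.castLE (by omega : Q ≤ 2*Q) k).rev))))).symm
    refine Eq.trans (Finset.sum_congr rfl (fun x _ =>
      term_val κ B₁ B₂ B hB η ξ hpq x.1.1 x.1.2 x.2.1 x.2.2)) ?_
    refine Eq.trans (Fintype.sum_prod_type
      (fun x : ({S : Finset (Fin (P+Q)) // S.card = P}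
          × Equiv.Perm (Fin (2*P)) × Equiv.Perm (Fin (2*Q))) =>
        ((ksgn κ x.2.1 * ∏ k : Fin P,
            B₁ (η (x.2.1 (Fin.castLE (by omega) k)))
               (η (x.2.1 (Fin.castLE (by omega : P ≤ 2*P) k).rev))) * (ksgn κ x.2.2 * ∏ k : Fin Q,
            B₂ (ξ (x.2.2 (Fin.castLE (by omega) k)))
               (ξ (x.2.2 (Fin.castLE (by omega : Q ≤ 2*Q) k).rev)))))) ?_
    dsimp only
    rw [hmul, Finset.sum_const, Finset.card_univ, Fintype.card_finset_len, Fintype.card_fin,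
      nsmul_eq_mul]
  have hR1 : ampl κ B₁ P η = (P.factorial : ℂ)⁻¹ *
      ∑ σ₁ : Equiv.Perm (Fin (2*P)), ksgn κ σ₁ * ∏ k : Fin P,
        B₁ (η (σ₁ (Fin.castLE (by omega) k)))
           (η (σ₁ (Fin.castLE (by omega : P ≤ 2*P) k).rev)) := rfl
  have hR2 : ampl κ B₂ Q ξ = (Q.factorial : ℂ)⁻¹ *
      ∑ σ₂ : Equiv.Perm (Fin (2*Q)), ksgn κ σ₂ * ∏ k : Fin Q,
        B₂ (ξ (σ₂ (Fin.castLE (by omega) k)))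
           (ξ (σ₂ (Fin.castLE (by omega : Q ≤ 2*Q) k).rev)) := rfl
  rw [hL, ← hstep1, hstep2.symm, hstep3, hR1, hR2]
  have hnat : ((P+Q).choose P) * P.factorial * Q.factorial = (P+Q).factorial := by
    have h1 := Nat.choose_mul_factorial_mul_factorial (Nat.le_add_right P Q)
    simpa [Nat.add_sub_cancel_left] using h1
  have hC : (((P+Q).choose P : ℂ)) * (P.factorial : ℂ) * (Q.factorial : ℂ)
      = ((P+Q).factorial : ℂ) := by exact_mod_cast congrArg Nat.cast hnat
  have h1 : ((P+Q).factorial : ℂ) ≠ 0 := Nat.cast_ne_zero.2 (Nat.factorial_ne_zero _)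
  have h2 : (P.factorial : ℂ) ≠ 0 := Nat.cast_ne_zero.2 (Nat.factorial_ne_zero _)
  have h3 : (Q.factorial : ℂ) ≠ 0 := Nat.cast_ne_zero.2 (Nat.factorial_ne_zero _)
  field_simp
  linear_combination (∑ σ₁ : Equiv.Perm (Fin (2*P)), ksgn κ σ₁ * ∏ k : Fin P,
            B₁ (η (σ₁ (Fin.castLE (by omega) k)))
               (η (σ₁ (Fin.castLE (by omega : P ≤ 2*P) k).rev)))
        * (∑ σ₂ : Equiv.Perm (Fin (2*Q)), ksgn κ σ₂ * ∏ k : Fin Q,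
            B₂ (ξ (σ₂ (Fin.castLE (by omega) k)))
               (ξ (σ₂ (Fin.castLE (by omega : Q ≤ 2*Q) k).rev))) * hC

end Key

/-- Disjoint gluing / factorization of amplitudes: for the list
`z = ((η₁,0), …, (η_p,0), (0,ξ₁), …, (0,ξ_q))` in `V₁ × V₂`, with the direct-sum form
`B ((a,b)) ((a',b')) = B₁ a a' + B₂ b b'`, the amplitude `A(z)` vanishes when `p, q` are
both odd, and factorizes as `A₁(η) · A₂(ξ)` when `p, q` are both even. -/
theorem stmt_12 {V₁ V₂ : Type*} [AddCommGroup V₁] [Module ℂ V₁]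
    [AddCommGroup V₂] [Module ℂ V₂]
    (κ : ℂ) (hκ : κ = 1 ∨ κ = -1)
    (B₁ : V₁ →ₗ[ℂ] V₁ →ₗ[ℂ] ℂ) (B₂ : V₂ →ₗ[ℂ] V₂ →ₗ[ℂ] ℂ)
    (B : (V₁ × V₂) →ₗ[ℂ] (V₁ × V₂) →ₗ[ℂ] ℂ)
    (hB : ∀ z w : V₁ × V₂, B z w = B₁ z.1 w.1 + B₂ z.2 w.2)
    (p q N : ℕ) (hpq : p + q = 2 * N)
    (η : Fin p → V₁) (ξ : Fin q → V₂) :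
    (Odd p → Odd q →
      ampl κ B N (fun i =>
        Fin.append (fun j => (η j, (0 : V₂))) (fun j => ((0 : V₁), ξ j))
          (Fin.cast hpq.symm i)) = 0) ∧
    (∀ (P Q : ℕ) (hP : p = 2 * P) (hQ : q = 2 * Q),
      ampl κ B N (fun i =>
        Fin.append (fun j => (η j, (0 : V₂))) (fun j => ((0 : V₁), ξ j))
          (Fin.cast hpq.symm i)) =
      ampl κ B₁ P (fun i => η (Fin.cast hP.symm i)) *
        ampl κ B₂ Q (fun i => ξ (Fin.cast hQ.symm i))) := by
  
  constructor
  · intro hp _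
    classical
    have hL : ampl κ B N (fun i =>
        Fin.append (fun j => (η j, (0 : V₂))) (fun j => ((0 : V₁), ξ j))
          (Fin.cast hpq.symm i))
        = (N.factorial : ℂ)⁻¹ * ∑ σ : Equiv.Perm (Fin (2*N)), ksgn κ σ *
            ∏ j : Fin N, B (zfun p q N hpq η ξ (σ (cN j))) (zfun p q N hpq η ξ (σ (rN j))) :=
      rfl
    rw [hL]
    have hsum : ∑ σ : Equiv.Perm (Fin (2*N)), ksgn κ σ *
        ∏ j : Fin N, B (zfun p q N hpq η ξ (σ (cN j))) (zfun p q N hpq η ξ (σ (rN j))) = 0 := by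
      refine Finset.sum_eq_zero fun σ _ => ?_
      by_cases hcomp : ∀ j : Fin N, ((σ (cN j)).val < p ↔ (σ (rN j)).val < p)
      · exfalso
        have h0 := compat_card (by omega) σ hcomp
        obtain ⟨m, hm⟩ := hp
        omega
      · obtain ⟨j, hj⟩ := not_forall.1 hcomp
        exact mul_eq_zero_of_right _ (Finset.prod_eq_zero (Finset.mem_univ j)
          (B_cross_zero B₁ B₂ B hB hpq η ξ _ _ hj))
    rw [hsum, mul_zero]
  · intro P Q hP hQ
    subst hP
    subst hQ
    have hN : N = P + Q := by omega
    subst hN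
    exact key_even κ B₁ B₂ B hκ hB P Q η ξ hpq
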